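/- Let D be a t-local domain. Then: (1) every t-invertible ideal I of D (i.e., an ideal with (I I^{-1})^t = D) is principal; (2) if I is an ideal of D such that (I^n)^t = D for some n ≥ 2, then I is principal. -/
import Mathlib


open scoped nonZeroDivisors

/-- The `t`-closure of a fractional ideal `E` of an integral domain `D`:
the union (here: supremum, which is a directed union) of `F^v = (F⁻¹)⁻¹` over all
nonzero finitely generated fractional subideals `F` of `E`, viewed as a
`D`-submodule of the fraction field of `D`. -/
noncomputable def tClos (D : Type*) [CommRing D] [IsDomain D]
    (E : FractionalIdeal D⁰ (FractionRing D)) : Submodule D (FractionRing D) :=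
  ⨆ F ∈ {F : FractionalIdeal D⁰ (FractionRing D) |
      F ≠ 0 ∧ F ≤ E ∧ (F : Submodule D (FractionRing D)).FG},
    (((F⁻¹)⁻¹ : FractionalIdeal D⁰ (FractionRing D)) : Submodule D (FractionRing D))

/-- An integral ideal `I` of an integral domain `D` is a `t`-ideal if `I = I^t`. -/
def Ideal.IsT {D : Type*} [CommRing D] [IsDomain D] (I : Ideal D) : Prop :=
  ((I : FractionalIdeal D⁰ (FractionRing D)) : Submodule D (FractionRing D)) = tClos D I

/-- Monotonicity used for `t`-closure: if `E ≤ E'`, then `tClos E ≤ tClos E'`. -/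
lemma tClos_mono {D : Type*} [CommRing D] [IsDomain D]
    {E E' : FractionalIdeal D⁰ (FractionRing D)} (h : E ≤ E') :
    tClos D E ≤ tClos D E' := by
  refine iSup₂_le fun F hF => ?_
  exact le_iSup₂_of_le F ⟨hF.1, hF.2.1.trans h, hF.2.2⟩ le_rfl

/-- In a `t`-local domain, an integral fractional ideal whose `t`-closure is everything
must be the unit ideal. -/
lemma eq_one_of_tClos_eq_one {D : Type*} [CommRing D] [IsDomain D] [IsLocalRing D]
    (htl : (IsLocalRing.maximalIdeal D).IsT)
    {E : FractionalIdeal D⁰ (FractionRing D)} (hE : E ≤ 1)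
    (h : tClos D E =
      ((1 : FractionalIdeal D⁰ (FractionRing D)) : Submodule D (FractionRing D))) :
    E = 1 := by
  obtain ⟨J, rfl⟩ := FractionalIdeal.le_one_iff_exists_coeIdeal.mp hE
  by_contra hne
  have hJ : J ≠ ⊤ := by
    intro hJ
    exact hne (by rw [hJ]; exact FractionalIdeal.coeIdeal_eq_one.mpr Ideal.one_eq_top.symm)
  have hle : (J : FractionalIdeal D⁰ (FractionRing D)) ≤
      (IsLocalRing.maximalIdeal D : FractionalIdeal D⁰ (FractionRing D)) :=
    FractionalIdeal.coeIdeal_le_coeIdeal _ |>.mpr (IsLocalRing.le_maximalIdeal hJ)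
  have h2 : tClos D (J : FractionalIdeal D⁰ (FractionRing D)) ≤
      ((IsLocalRing.maximalIdeal D : FractionalIdeal D⁰ (FractionRing D)) :
        Submodule D (FractionRing D)) := by
    rw [htl]
    exact tClos_mono hle
  rw [h] at h2
  have h1 : (1 : FractionRing D) ∈
      ((IsLocalRing.maximalIdeal D : FractionalIdeal D⁰ (FractionRing D)) :
        Submodule D (FractionRing D)) := h2 (by simp)
  rw [FractionalIdeal.mem_coe, FractionalIdeal.mem_coeIdeal] at h1
  obtain ⟨x, hx, hx1⟩ := h1
  have : x = 1 := (IsFractionRing.injective D (FractionRing D)) (by rw [hx1, map_one])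
  exact (IsLocalRing.maximalIdeal.isMaximal D).ne_top
    (Ideal.eq_top_iff_one _ |>.mpr (this ▸ hx))

lemma mul_inv_le_one' {D : Type*} [CommRing D] [IsDomain D]
    (I : FractionalIdeal D⁰ (FractionRing D)) : I * I⁻¹ ≤ 1 := by
  rcases eq_or_ne I 0 with rfl | hI
  · simp only [zero_mul]
    exact FractionalIdeal.zero_le _
  · rw [mul_comm]
    exact (FractionalIdeal.le_div_iff_mul_le hI).mp le_rfl

/-- Let `D` be a `t`-local domain. Then:
(1) every `t`-invertible ideal `I` of `D` (i.e. `(I I⁻¹)^t = D`) is principal;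
(2) if `I` is an ideal of `D` with `(I^n)^t = D` for some `n ≥ 2`, then `I` is
principal. -/
theorem t_local_t_invertible_principal {D : Type*} [CommRing D] [IsDomain D]
    [IsLocalRing D] (htl : (IsLocalRing.maximalIdeal D).IsT) :
    (∀ I : Ideal D,
        tClos D ((I : FractionalIdeal D⁰ (FractionRing D)) *
            (I : FractionalIdeal D⁰ (FractionRing D))⁻¹) =
          ((1 : FractionalIdeal D⁰ (FractionRing D)) : Submodule D (FractionRing D)) →
        I.IsPrincipal) ∧
    (∀ (I : Ideal D) (n : ℕ), 2 ≤ n →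
        tClos D ((I ^ n : Ideal D) : FractionalIdeal D⁰ (FractionRing D)) =
          ((1 : FractionalIdeal D⁰ (FractionRing D)) : Submodule D (FractionRing D)) →
        I.IsPrincipal) := by
  constructor
  · intro I h
    have hE : (I : FractionalIdeal D⁰ (FractionRing D)) *
        (I : FractionalIdeal D⁰ (FractionRing D))⁻¹ = 1 :=
      eq_one_of_tClos_eq_one htl (mul_inv_le_one' _) h
    have hf : {J : Ideal D | J.IsMaximal}.Finite := by
      apply Set.Finite.subset (Set.finite_singleton (IsLocalRing.maximalIdeal D))
      intro J hJ
      exact IsLocalRing.eq_maximalIdeal hJ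
    have hp : Submodule.IsPrincipal
        ((I : FractionalIdeal D⁰ (FractionRing D)) : Submodule D (FractionRing D)) :=
      FractionalIdeal.isPrincipal.of_finite_maximals_of_inv le_rfl hf _ _ hE
    rw [FractionalIdeal.coe_coeIdeal] at hp
    exact (IsLocalization.coeSubmodule_isPrincipal _ le_rfl).mp hp
  · intro I n hn h
    have hE : ((I ^ n : Ideal D) : FractionalIdeal D⁰ (FractionRing D)) = 1 :=
      eq_one_of_tClos_eq_one htl FractionalIdeal.coeIdeal_le_one h
    have hIn : (I : Ideal D) ^ n = ⊤ := by
      simpa [Ideal.one_eq_top] using FractionalIdeal.coeIdeal_eq_one.mp hE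
    have hI : I = ⊤ := by
      refine top_le_iff.mp ?_
      calc (⊤ : Ideal D) = I ^ n := hIn.symm
        _ ≤ I := Ideal.pow_le_self (by omega)
    exact ⟨⟨1, by simp [hI, Ideal.span_singleton_one]⟩⟩
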